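/- Let g : [1,∞) → (0,∞) be an increasing function satisfying the doubling condition g(2x) ≤ D·g(x) for all x ≥ 1. Then for every integer m ≥ 0 there exists a constant C, depending only on m and D, such that for all r ∈ (0,1): ∑_{k=1}^∞ r^k · C(k+m, k) · g(k) ≤ C · g(1/(1−r)) · (1−r)^{−m−1}, where C(k+m,k) denotes the binomial coefficient (k+m choose k). -/

import Mathlib

private lemma aux_fact (n mm L : ℕ) : n ^ L * (n + mm).factorial ≤ (n + mm + L).factorial := by
  induction L with
  | zero => simp
  | succ L ih =>
    calc n ^ (L + 1) * (n + mm).factorial = n * (n ^ L * (n + mm).factorial) := by ring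
    _ ≤ n * (n + mm + L).factorial := Nat.mul_le_mul_left _ ih
    _ ≤ (n + mm + L + 1) * (n + mm + L).factorial := Nat.mul_le_mul_right _ (by omega)
    _ = (n + mm + (L + 1)).factorial := by
        rw [show n + mm + (L + 1) = (n + mm + L) + 1 by omega, Nat.factorial_succ]

private lemma aux_nat2 (n mm L : ℕ) :
    n ^ L * ((n + mm).choose mm) * mm.factorial ≤
      ((n + (mm + L)).choose (mm + L)) * (mm + L).factorial := by
  have h1 : (n + mm).choose mm * mm.factorial * n.factorial = (n + mm).factorial := by
    have := Nat.choose_mul_factorial_mul_factorial (show mm ≤ n + mm by omega)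
    simpa [show n + mm - mm = n by omega] using this
  have h2 : (n + (mm + L)).choose (mm + L) * (mm + L).factorial * n.factorial
      = (n + (mm + L)).factorial := by
    have := Nat.choose_mul_factorial_mul_factorial (show mm + L ≤ n + (mm + L) by omega)
    simpa [show n + (mm + L) - (mm + L) = n by omega] using this
  have key : n ^ L * ((n + mm).choose mm) * mm.factorial * n.factorial ≤
      ((n + (mm + L)).choose (mm + L)) * (mm + L).factorial * n.factorial := by
    calc n ^ L * ((n + mm).choose mm) * mm.factorial * n.factorial
        = n ^ L * ((n + mm).choose mm * mm.factorial * n.factorial) := by ring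
      _ = n ^ L * (n + mm).factorial := by rw [h1]
      _ ≤ (n + mm + L).factorial := aux_fact n mm L
      _ = (n + (mm + L)).factorial := by ring_nf
      _ = ((n + (mm + L)).choose (mm + L)) * (mm + L).factorial * n.factorial := h2.symm
  exact Nat.le_of_mul_le_mul_right key n.factorial_pos

private lemma aux_real (n mm L : ℕ) :
    (n : ℝ) ^ L * ((n + mm).choose mm : ℝ) ≤
      ((mm + L).factorial : ℝ) / mm.factorial * ((n + (mm + L)).choose (mm + L) : ℝ) := by
  rw [div_mul_eq_mul_div, le_div_iff₀ (by exact_mod_cast mm.factorial_pos)]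
  have := aux_nat2 n mm L
  have : ((n ^ L * ((n + mm).choose mm) * mm.factorial : ℕ) : ℝ)
      ≤ ((((n + (mm + L)).choose (mm + L)) * (mm + L).factorial : ℕ) : ℝ) := by
    exact_mod_cast this
  push_cast at this
  linarith

/-- Let `g : [1,∞) → (0,∞)` be increasing and satisfy the doubling
condition `g(2x) ≤ D·g(x)`. Then for every `m : ℕ` there is a constant `C = C(m, D)`
such that for all `r ∈ (0,1)`,
`∑_{k=1}^∞ r^k · C(k+m, k) · g(k) ≤ C · g(1/(1−r)) · (1−r)^{−m−1}`. -/
theorem cesaro_weight_sum_estimate (D : ℝ) (m : ℕ) :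
    ∃ C : ℝ, 0 < C ∧ ∀ g : ℝ → ℝ,
      (∀ x : ℝ, 1 ≤ x → 0 < g x) →
      (∀ x y : ℝ, 1 ≤ x → x ≤ y → g x ≤ g y) →
      (∀ x : ℝ, 1 ≤ x → g (2 * x) ≤ D * g x) →
      ∀ r : ℝ, 0 < r → r < 1 →
        ∑' k : ℕ, r ^ (k + 1) * (Nat.choose (k + 1 + m) (k + 1) : ℝ) * g ((k + 1 : ℕ) : ℝ)
          ≤ C * g (1 / (1 - r)) * (1 - r) ^ (-(m : ℤ) - 1) := by
  classical
  obtain ⟨L, hL⟩ := pow_unbounded_of_one_lt (R := ℝ) (|D| + 1) one_lt_two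
  set E : ℝ := |D| + 1 with hE_def
  have hE1 : (1 : ℝ) ≤ E := le_add_of_nonneg_left (abs_nonneg D)
  have hE0 : (0 : ℝ) < E := lt_of_lt_of_le one_pos hE1
  have hEL : E ≤ 2 ^ L := hL.le
  set P : ℝ := ((m + L).factorial : ℝ) / m.factorial with hP_def
  have hP0 : 0 < P := by positivity
  refine ⟨E * (1 + P), by positivity, ?_⟩
  intro g hg0 hgmono hgD r hr0 hr1
  have hr' : 0 < 1 - r := by linarith
  set s : ℝ := 1 / (1 - r) with hs_def
  have hs1 : 1 ≤ s := by rw [hs_def, le_div_iff₀ hr']; linarith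
  have hgs : 0 < g s := hg0 _ hs1
  have hDE : D ≤ E := le_trans (le_abs_self D) (by linarith)
  -- iterated doubling
  have iter : ∀ j : ℕ, ∀ x : ℝ, 1 ≤ x → g (2 ^ j * x) ≤ E ^ j * g x := by
    intro j
    induction j with
    | zero => intro x hx; simp
    | succ j ih =>
      intro x hx
      have hx' : 1 ≤ 2 ^ j * x := by
        have h2 : (1 : ℝ) ≤ 2 ^ j := one_le_pow₀ one_le_two
        nlinarith
      have h1 : g (2 ^ (j + 1) * x) = g (2 * (2 ^ j * x)) := by ring_nf
      calc g (2 ^ (j + 1) * x) = g (2 * (2 ^ j * x)) := h1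
        _ ≤ D * g (2 ^ j * x) := hgD _ hx'
        _ ≤ E * g (2 ^ j * x) := mul_le_mul_of_nonneg_right hDE (hg0 _ hx').le
        _ ≤ E * (E ^ j * g x) := mul_le_mul_of_nonneg_left (ih x hx) hE0.le
        _ = E ^ (j + 1) * g x := by ring
  -- pointwise bound
  have key : ∀ n : ℕ, 1 ≤ n → g n ≤ E * g s * (1 + ((n : ℝ) * (1 - r)) ^ L) := by
    intro n hn
    have hn1 : (1 : ℝ) ≤ (n : ℝ) := by exact_mod_cast hn
    have ht0 : (0 : ℝ) ≤ ((n : ℝ) * (1 - r)) ^ L := by positivity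
    by_cases hcase : (n : ℝ) ≤ s
    · have h1 : g n ≤ g s := hgmono _ _ hn1 hcase
      nlinarith [mul_nonneg (sub_nonneg.2 hE1) hgs.le,
        mul_nonneg (mul_nonneg hE0.le hgs.le) ht0]
    · push_neg at hcase
      have hex : ∃ j : ℕ, (n : ℝ) ≤ 2 ^ j * s := by
        refine ⟨n, ?_⟩
        have h1 : (n : ℝ) ≤ 2 ^ n := by exact_mod_cast (Nat.lt_two_pow_self (n := n)).le
        nlinarith [pow_pos (show (0:ℝ) < 2 by norm_num) n]
      set j := Nat.find hex with hj_def
      have hj : (n : ℝ) ≤ 2 ^ j * s := Nat.find_spec hex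
      have hminp : ∀ i, i < j → ¬ ((n : ℝ) ≤ 2 ^ i * s) := fun i hi => Nat.find_min hex hi
      have hj0 : j ≠ 0 := by
        intro h
        rw [h] at hj
        simp at hj
        linarith
      clear_value j
      obtain ⟨j', rfl⟩ := Nat.exists_eq_succ_of_ne_zero hj0
      have hmin : ¬ ((n : ℝ) ≤ 2 ^ j' * s) := hminp j' (Nat.lt_succ_self j')
      push_neg at hmin
      have h2j' : (2 : ℝ) ^ j' ≤ (n : ℝ) * (1 - r) := by
        rw [hs_def] at hmin
        rw [mul_one_div] at hmin
        have := (div_lt_iff₀ hr').mp hmin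
        linarith
      calc g n ≤ g (2 ^ (j' + 1) * s) := hgmono _ _ hn1 hj
        _ ≤ E ^ (j' + 1) * g s := iter _ s hs1
        _ = E * E ^ j' * g s := by rw [pow_succ]; ring
        _ ≤ E * (2 ^ L) ^ j' * g s := by
            have : E ^ j' ≤ (2 ^ L) ^ j' := pow_le_pow_left₀ hE0.le hEL j'
            exact mul_le_mul_of_nonneg_right (mul_le_mul_of_nonneg_left this hE0.le) hgs.le
        _ = E * ((2 : ℝ) ^ j') ^ L * g s := by rw [← pow_mul, ← pow_mul, mul_comm L j']
        _ ≤ E * ((n : ℝ) * (1 - r)) ^ L * g s := by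
            have : ((2 : ℝ) ^ j') ^ L ≤ ((n : ℝ) * (1 - r)) ^ L :=
              pow_le_pow_left₀ (by positivity) h2j' L
            exact mul_le_mul_of_nonneg_right (mul_le_mul_of_nonneg_left this hE0.le) hgs.le
        _ ≤ E * g s * (1 + ((n : ℝ) * (1 - r)) ^ L) := by nlinarith
  -- series
  have hrn : ‖r‖ < 1 := by rw [Real.norm_eq_abs, abs_of_pos hr0]; exact hr1
  have hsumB := hasSum_choose_mul_geometric_of_norm_lt_one (𝕜 := ℝ) m hrn
  have hsumC := hasSum_choose_mul_geometric_of_norm_lt_one (𝕜 := ℝ) (m + L) hrn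
  set b : ℕ → ℝ := fun n => ((n + m).choose m : ℝ) * r ^ n with hb_def
  set c : ℕ → ℝ := fun n => ((n + (m + L)).choose (m + L) : ℝ) * r ^ n with hc_def
  have hsb : Summable b := hsumB.summable
  have hsc : Summable c := hsumC.summable
  have hsb' : Summable (fun k => b (k + 1)) := (summable_nat_add_iff 1).2 hsb
  have hsc' : Summable (fun k => c (k + 1)) := (summable_nat_add_iff 1).2 hsc
  set f : ℕ → ℝ := fun k => E * g s * (b (k + 1) + P * (1 - r) ^ L * c (k + 1)) with hf_def
  have hsf : Summable f := by
    apply Summable.mul_left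
    exact hsb'.add (hsc'.mul_left _)
  set a : ℕ → ℝ := fun k =>
    r ^ (k + 1) * (Nat.choose (k + 1 + m) (k + 1) : ℝ) * g ((k + 1 : ℕ) : ℝ) with ha_def
  have ha_nonneg : ∀ k, 0 ≤ a k := by
    intro k
    have : (0 : ℝ) < g ((k + 1 : ℕ) : ℝ) := hg0 _ (by exact_mod_cast Nat.one_le_iff_ne_zero.2 (Nat.succ_ne_zero k))
    positivity
  have hale : ∀ k, a k ≤ f k := by
    intro k
    have hch : ((k + 1 + m).choose (k + 1) : ℝ) = (((k + 1) + m).choose m : ℝ) := by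
      norm_cast
      rw [← Nat.choose_symm (show m ≤ k + 1 + m by omega)]
      congr 1
      omega
    have hgk := key (k + 1) (by omega)
    have hrp : (0 : ℝ) < r ^ (k + 1) := pow_pos hr0 _
    have hchp : (0 : ℝ) ≤ (((k + 1) + m).choose m : ℝ) := by positivity
    have hgkp : (0 : ℝ) < g ((k + 1 : ℕ) : ℝ) := hg0 _
      (by exact_mod_cast Nat.one_le_iff_ne_zero.2 (Nat.succ_ne_zero k))
    have hcast : ((k + 1 : ℕ) : ℝ) = ((k : ℝ) + 1) := by push_cast; ring
    have step1 : a k ≤ r ^ (k + 1) * (((k + 1) + m).choose m : ℝ) *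
        (E * g s * (1 + (((k + 1 : ℕ) : ℝ) * (1 - r)) ^ L)) := by
      rw [ha_def]
      simp only
      rw [hch]
      exact mul_le_mul_of_nonneg_left hgk (by positivity)
    have step2 : (((k + 1 : ℕ)) : ℝ) ^ L * (((k + 1) + m).choose m : ℝ) ≤
        P * (((k + 1) + (m + L)).choose (m + L) : ℝ) := by
      have := aux_real (k + 1) m L
      push_cast at this ⊢
      linarith
    rw [hf_def]
    simp only [hb_def, hc_def]
    have expand : r ^ (k + 1) * (((k + 1) + m).choose m : ℝ) *
        (E * g s * (1 + (((k + 1 : ℕ) : ℝ) * (1 - r)) ^ L))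
        = E * g s * ((((k + 1) + m).choose m : ℝ) * r ^ (k + 1))
          + E * g s * r ^ (k + 1) * (1 - r) ^ L *
            ((((k + 1 : ℕ)) : ℝ) ^ L * (((k + 1) + m).choose m : ℝ)) := by
      rw [mul_pow]
      ring
    calc a k ≤ _ := step1
      _ = _ := expand
      _ ≤ E * g s * ((((k + 1) + m).choose m : ℝ) * r ^ (k + 1))
          + E * g s * r ^ (k + 1) * (1 - r) ^ L *
            (P * (((k + 1) + (m + L)).choose (m + L) : ℝ)) := by
          have hpos : (0 : ℝ) ≤ E * g s * r ^ (k + 1) * (1 - r) ^ L := by positivity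
          have := mul_le_mul_of_nonneg_left step2 hpos
          linarith
      _ = E * g s * ((((k + 1) + m).choose m : ℝ) * r ^ (k + 1)
          + P * (1 - r) ^ L * ((((k + 1) + (m + L)).choose (m + L) : ℝ) * r ^ (k + 1))) := by
          ring
  have hsa : Summable a := Summable.of_nonneg_of_le ha_nonneg hale hsf
  have hT : ∑' k, a k ≤ ∑' k, f k := Summable.tsum_le_tsum hale hsa hsf
  -- compute tsum f bound
  have hb0 : b 0 = 1 := by simp [hb_def]
  have hc0 : c 0 = 1 := by simp [hc_def]
  have htb : ∑' k, b (k + 1) ≤ 1 / (1 - r) ^ (m + 1) := by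
    have := Summable.tsum_eq_zero_add hsb
    rw [hsumB.tsum_eq] at this
    rw [hb0] at this
    linarith [this]
  have htc : ∑' k, c (k + 1) ≤ 1 / (1 - r) ^ (m + L + 1) := by
    have := Summable.tsum_eq_zero_add hsc
    rw [hsumC.tsum_eq] at this
    rw [hc0] at this
    have h2 : m + L + 1 = (m + L) + 1 := rfl
    rw [h2]
    linarith [this]
  have htf : ∑' k, f k ≤ E * g s * (1 / (1 - r) ^ (m + 1) + P * (1 - r) ^ L * (1 / (1 - r) ^ (m + L + 1))) := by
    rw [hf_def]
    rw [tsum_mul_left, Summable.tsum_add hsb' (hsc'.mul_left _), tsum_mul_left]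
    have h1 : ∑' k, b (k + 1) + P * (1 - r) ^ L * ∑' k, c (k + 1)
        ≤ 1 / (1 - r) ^ (m + 1) + P * (1 - r) ^ L * (1 / (1 - r) ^ (m + L + 1)) := by
      have h2 : P * (1 - r) ^ L * ∑' k, c (k + 1) ≤ P * (1 - r) ^ L * (1 / (1 - r) ^ (m + L + 1)) :=
        mul_le_mul_of_nonneg_left htc (by positivity)
      linarith
    exact mul_le_mul_of_nonneg_left h1 (by positivity)
  -- final arithmetic
  have hzpow : (1 - r) ^ (-(m : ℤ) - 1) = ((1 - r) ^ (m + 1))⁻¹ := by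
    have : (-(m : ℤ) - 1) = -((m + 1 : ℕ) : ℤ) := by push_cast; ring
    rw [this, zpow_neg, zpow_natCast]
  have hfinal : E * g s * (1 / (1 - r) ^ (m + 1) + P * (1 - r) ^ L * (1 / (1 - r) ^ (m + L + 1)))
      = E * (1 + P) * g s * (1 - r) ^ (-(m : ℤ) - 1) := by
    rw [hzpow]
    have hne : (1 - r) ≠ 0 := ne_of_gt hr'
    field_simp
    ring
  calc ∑' k, a k ≤ ∑' k, f k := hT
    _ ≤ _ := htf
    _ = E * (1 + P) * g s * (1 - r) ^ (-(m : ℤ) - 1) := hfinal
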